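/- In the balls-in-bins model (each X_i uniformly distributed on {1,…,n}), let b ≥ 2, n ≥ 1 be integers, let C := C(b,n) be the number of collisions after b throws, and suppose E[C] > 0. Then there exists a probability measure ν on ℤ_{≥0} × ℤ_{≥0} whose first marginal is the law of C, whose second marginal is the size-biased law of C (the law assigning probability k·P(C = k)/E[C] to each k), and which is supported on the set {(x, y) : y − x ∈ {0, 1}}. -/

import Mathlib

open MeasureTheory ProbabilityTheory Filter Topology
open scoped ENNReal NNReal

/-- Number of collisions after `b` throws, `C(b,n) = b - |{X_1,…,X_b}|`. -/
def collisions {Ω : Type*} (X : ℕ → Ω → ℕ) (b : ℕ) (ω : Ω) : ℕ :=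
  b - ((Finset.range b).image fun i => X i ω).card

/-- `B(c,n) = inf { b : C(b,n) ≥ c }` in the balls-in-bins model. -/
noncomputable def ballsB {Ω : Type*} (X : ℕ → Ω → ℕ) (c : ℕ) (ω : Ω) : ℕ :=
  sInf {b : ℕ | c ≤ collisions X b ω}

/-- The uniform distribution on the bins `{1, …, n}`, as a measure on `ℕ`. -/
noncomputable def unifBins (n : ℕ) : Measure ℕ :=
  ((n : ℝ≥0∞))⁻¹ • ∑ k ∈ Finset.Icc 1 n, Measure.dirac k

/-- The size-biased law of a distribution `L` on `ℕ`, with mean `m`: it assigns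
mass `k·L{k}/m` to each `k ≥ 0`. -/
noncomputable def sizeBiased (L : Measure ℕ) (m : ℝ) : Measure ℕ :=
  Measure.sum fun k : ℕ => (((k : ℝ≥0∞) * L ({k} : Set ℕ)) / ENNReal.ofReal m) • Measure.dirac k


open Finset
namespace BBC
variable {b n : ℕ}




/-- the bins -/
def Fb (n : ℕ) : Finset ℕ := Finset.Icc 1 n

/-- the configurations -/
def Vb (b n : ℕ) : Finset (Fin b → ℕ) := Fintype.piFinset fun _ => Fb n

def cf (b : ℕ) (x : Fin b → ℕ) : ℕ := b - (Finset.image x Finset.univ).card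

def prevs (i : Fin b) : Finset (Fin b) := Finset.univ.filter (· < i)

def As (i : Fin b) (x : Fin b → ℕ) : Finset ℕ := (prevs i).image x

def ev (i : Fin b) (x : Fin b → ℕ) : ℕ := if x i ∈ As i x then 1 else 0

def sv (i : Fin b) (x : Fin b → ℕ) : ℕ := (As i x).card

def Ts (i : Fin b) (x : Fin b → ℕ) : Finset ℕ := (Finset.univ.erase i).image x

def gv (k : ℕ) (i : Fin b) (x : Fin b → ℕ) : ℕ := if b ≤ k + (Ts i x).card then 1 else 0

def Qs (i : Fin b) : Finset (Fin b) := Finset.univ.filter (i < ·)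

lemma card_Vb : (Vb b n).card = n ^ b := by
  simp [Vb, Fintype.card_piFinset, Fb]

lemma mem_Vb {x : Fin b → ℕ} : x ∈ Vb b n ↔ ∀ i, x i ∈ Fb n := by
  simp [Vb, Fintype.mem_piFinset]

lemma sum_ev (x : Fin b → ℕ) : ∑ i, ev i x = cf b x := by
  have key : ∀ r, r ≤ b →
      ∑ i ∈ Finset.univ.filter (fun j : Fin b => (j : ℕ) < r), ev i x
        + ((Finset.univ.filter (fun j : Fin b => (j : ℕ) < r)).image x).card = r := by
    intro r hr
    induction r with
    | zero => simp
    | succ r ih =>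
      have hrb : r < b := hr
      have ih' := ih (le_of_lt hrb)
      set i : Fin b := ⟨r, hrb⟩ with hi
      have hins : Finset.univ.filter (fun j : Fin b => (j : ℕ) < r + 1)
          = insert i (Finset.univ.filter (fun j : Fin b => (j : ℕ) < r)) := by
        ext j
        simp only [Finset.mem_filter, Finset.mem_insert, Finset.mem_univ, true_and]
        constructor
        · intro hj
          rcases Nat.lt_succ_iff_lt_or_eq.mp hj with h | h
          · exact Or.inr h
          · exact Or.inl (Fin.ext h)
        · rintro (rfl | hj)
          · exact Nat.lt_succ_self _
          · exact Nat.lt_succ_of_lt hj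
      have hnotmem : i ∉ Finset.univ.filter (fun j : Fin b => (j : ℕ) < r) := by
        simp [hi]
      have hprev : prevs i = Finset.univ.filter (fun j : Fin b => (j : ℕ) < r) := by
        ext j; simp [prevs, Fin.lt_def, hi]
      rw [hins, Finset.sum_insert hnotmem, Finset.image_insert]
      by_cases hmem : x i ∈ As i x
      · have hxi : x i ∈ (Finset.univ.filter (fun j : Fin b => (j : ℕ) < r)).image x := by
          rw [← hprev]; exact hmem
        rw [Finset.insert_eq_self.mpr hxi]
        have : ev i x = 1 := by simp [ev, hmem]
        omega
      · have hxi : x i ∉ (Finset.univ.filter (fun j : Fin b => (j : ℕ) < r)).image x := by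
          rw [← hprev]; exact hmem
        rw [Finset.card_insert_of_notMem hxi]
        have : ev i x = 0 := by simp [ev, hmem]
        omega
  have := key b le_rfl
  have huniv : Finset.univ.filter (fun j : Fin b => (j : ℕ) < b) = Finset.univ := by
    ext j; simp [j.isLt]
  rw [huniv] at this
  have hcard : (Finset.image x Finset.univ).card ≤ b := by
    calc (Finset.image x Finset.univ).card ≤ (Finset.univ : Finset (Fin b)).card :=
        Finset.card_image_le
    _ = b := by simp
  unfold cf
  omega

lemma image_eq_insert (i : Fin b) (x : Fin b → ℕ) :
    Finset.image x Finset.univ = insert (x i) (Ts i x) := by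
  conv_lhs => rw [← Finset.insert_erase (Finset.mem_univ i)]
  rw [Finset.image_insert]; rfl

lemma As_subset_Ts (i : Fin b) (x : Fin b → ℕ) : As i x ⊆ Ts i x :=
  Finset.image_subset_image (by
    intro j hj
    simp only [prevs, Finset.mem_filter, Finset.mem_univ, true_and] at hj
    exact Finset.mem_erase.mpr ⟨ne_of_lt hj, Finset.mem_univ j⟩)

lemma image_eq_Ts_of_ev {i : Fin b} {x : Fin b → ℕ} (h : x i ∈ As i x) :
    Finset.image x Finset.univ = Ts i x := by
  rw [image_eq_insert i x, Finset.insert_eq_self.mpr (As_subset_Ts i x h)]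

lemma Ts_card_le (i : Fin b) (x : Fin b → ℕ) :
    (Ts i x).card ≤ (Finset.image x Finset.univ).card ∧
      (Finset.image x Finset.univ).card ≤ (Ts i x).card + 1 := by
  constructor
  · exact Finset.card_le_card (Finset.image_subset_image (Finset.erase_subset _ _))
  · rw [image_eq_insert i x]; exact Finset.card_insert_le _ _



def bl (p : Fin b → Prop) [DecidablePred p] (x z : Fin b → ℕ) : Fin b → ℕ :=
  fun j => if p j then x j else z j

lemma bl_invol (p : Fin b → Prop) [DecidablePred p] (x z : Fin b → ℕ) :
    bl p (bl p x z) (bl p z x) = x := by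
  funext j; by_cases h : p j <;> simp [bl, h]

lemma bl_mem (p : Fin b → Prop) [DecidablePred p] {x z : Fin b → ℕ}
    (hx : x ∈ Vb b n) (hz : z ∈ Vb b n) : bl p x z ∈ Vb b n := by
  simp only [Vb, Fintype.mem_piFinset] at *
  intro j; by_cases h : p j <;> simp [bl, h, hx j, hz j]

lemma blend_sum {M : Type*} [AddCommMonoid M]
    (p : Fin b → Prop) [DecidablePred p] (f : (Fin b → ℕ) → M) :
    ∑ x ∈ Vb b n, ∑ z ∈ Vb b n, f (bl p x z) = ∑ x ∈ Vb b n, ∑ z ∈ Vb b n, f x := by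
  rw [← Finset.sum_product', ← Finset.sum_product']
  exact Finset.sum_nbij' (fun q => (bl p q.1 q.2, bl p q.2 q.1))
    (fun q => (bl p q.1 q.2, bl p q.2 q.1))
    (by rintro ⟨x, z⟩ hq
        rw [Finset.mem_product] at hq ⊢
        exact ⟨bl_mem p hq.1 hq.2, bl_mem p hq.2 hq.1⟩)
    (by rintro ⟨x, z⟩ hq
        rw [Finset.mem_product] at hq ⊢
        exact ⟨bl_mem p hq.1 hq.2, bl_mem p hq.2 hq.1⟩)
    (by rintro ⟨x, z⟩ _; simp [bl_invol])
    (by rintro ⟨x, z⟩ _; simp [bl_invol])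
    (by rintro ⟨x, z⟩ _; rfl)




lemma card_Fb : (Fb n).card = n := by simp [Fb]

lemma count_coord (hn : 1 ≤ n) (i : Fin b) (A : Finset ℕ) (hA : A ⊆ Fb n) :
    ∑ z ∈ Vb b n, (if z i ∈ A then (1 : ℕ) else 0) = A.card * n ^ (b - 1) := by
  rw [Finset.sum_boole]
  have hfe : (Vb b n).filter (fun z => z i ∈ A)
      = Fintype.piFinset (Function.update (fun _ : Fin b => Fb n) i A) := by
    ext z
    simp only [Vb, Finset.mem_filter, Fintype.mem_piFinset]
    constructor
    · rintro ⟨hz, hzi⟩ j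
      by_cases hj : j = i
      · subst hj; simpa using hzi
      · rw [Function.update_of_ne hj]; exact hz j
    · intro h
      refine ⟨fun j => ?_, by simpa using h i⟩
      by_cases hj : j = i
      · subst hj; exact hA (by simpa using h j)
      · have := h j; rwa [Function.update_of_ne hj] at this
  have hupd : ∀ j, #(Function.update (fun _ : Fin b => Fb n) i A j)
      = Function.update (fun _ : Fin b => n) i A.card j := by
    intro j; by_cases hj : j = i
    · subst hj; simp
    · simp [Function.update_of_ne hj, card_Fb]
  rw [hfe, Fintype.card_piFinset]
  simp only [Nat.cast_id]
  calc (∏ j, #(Function.update (fun _ : Fin b => Fb n) i A j))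
      = ∏ j, Function.update (fun _ : Fin b => n) i A.card j :=
        Finset.prod_congr rfl (fun j _ => hupd j)
    _ = A.card * ∏ _j ∈ Finset.univ \ {i}, n :=
        Finset.prod_update_of_mem (Finset.mem_univ i) _ _
    _ = A.card * n ^ (b - 1) := by
        rw [Finset.prod_const, Finset.sdiff_singleton_eq_erase,
          Finset.card_erase_of_mem (Finset.mem_univ i)]
        simp

def cnt (n : ℕ) {b : ℕ} (k : ℕ) (i : Fin b) (A : Finset ℕ) : ℕ :=
  ((Vb b n).filter fun z => b ≤ k + (A ∪ (Qs i).image z).card).card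

lemma cnt_mono {k : ℕ} {i : Fin b} {A A' : Finset ℕ} (hA : A ⊆ Fb n) (hA' : A' ⊆ Fb n)
    (hc : A.card ≤ A'.card) : cnt n k i A ≤ cnt n k i A' := by
  generalize hd : (A \ A').card = d
  induction d using Nat.strong_induction_on generalizing A with
  | _ d ih =>
    by_cases hsub : A ⊆ A'
    · apply Finset.card_le_card
      apply Finset.monotone_filter_right
      intro z hz
      have : (A ∪ (Qs i).image z).card ≤ (A' ∪ (Qs i).image z).card :=
        Finset.card_le_card (Finset.union_subset_union_left hsub)
      omega
    · obtain ⟨a, haA, haA'⟩ := Finset.not_subset.mp hsub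
      have hne : (A' \ A).Nonempty := by
        rw [Finset.sdiff_nonempty]
        intro hsub'
        have := Finset.eq_of_subset_of_card_le hsub' hc
        exact haA' (this ▸ haA)
      obtain ⟨a', ha'⟩ := hne
      rw [Finset.mem_sdiff] at ha'
      obtain ⟨ha'A', ha'A⟩ := ha'
      set σ := Equiv.swap a a' with hσ
      set A₁ := A.image σ with hA₁
      have hσF : ∀ c ∈ Fb n, σ c ∈ Fb n := by
        intro c hc
        rcases eq_or_ne c a with rfl | h1
        · simpa [hσ, Equiv.swap_apply_left] using hA' ha'A'
        rcases eq_or_ne c a' with rfl | h2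
        · simpa [hσ, Equiv.swap_apply_right] using hA haA
        · rwa [hσ, Equiv.swap_apply_of_ne_of_ne h1 h2]
      have himg : ∀ z : Fin b → ℕ, A₁ ∪ (Qs i).image (σ ∘ z) = (A ∪ (Qs i).image z).image σ := by
        intro z
        rw [Finset.image_union, hA₁, ← Finset.image_image]
      have hVmap : ∀ z ∈ Vb b n, σ ∘ z ∈ Vb b n := by
        intro z hz
        simp only [Vb, Fintype.mem_piFinset] at hz ⊢
        intro j; exact hσF _ (hz j)
      have hcnt_eq : cnt n k i A = cnt n k i A₁ := by
        unfold cnt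
        apply Finset.card_nbij' (fun z => σ ∘ z) (fun z => σ ∘ z)
        · intro z hz
          simp only [Finset.mem_coe, Finset.mem_filter] at hz ⊢
          refine ⟨hVmap z hz.1, ?_⟩
          rw [himg, Finset.card_image_of_injective _ σ.injective]
          exact hz.2
        · intro z hz
          simp only [Finset.mem_coe, Finset.mem_filter] at hz ⊢
          refine ⟨hVmap z hz.1, ?_⟩
          have hAA₁ : A₁.image σ = A := by
            rw [hA₁, Finset.image_image]
            have hid : ⇑σ ∘ ⇑σ = id := by funext c; simp [hσ]
            simp [hid]
          have : A ∪ (Qs i).image (σ ∘ z) = (A₁ ∪ (Qs i).image z).image σ := by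
            rw [Finset.image_union, hAA₁, ← Finset.image_image]
          rw [this, Finset.card_image_of_injective _ σ.injective]
          exact hz.2
        · intro z _; funext j; simp [hσ]
        · intro z _; funext j; simp [hσ]
      have hA₁F : A₁ ⊆ Fb n := by
        intro u hu
        rw [hA₁, Finset.mem_image] at hu
        obtain ⟨v, hv, rfl⟩ := hu
        exact hσF v (hA hv)
      have hcard₁ : A₁.card = A.card := Finset.card_image_of_injective _ σ.injective
      have hsdiff : A₁ \ A' ⊆ (A \ A').erase a := by
        intro u hu
        rw [Finset.mem_sdiff, hA₁, Finset.mem_image] at hu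
        obtain ⟨⟨v, hv, rfl⟩, hu2⟩ := hu
        have hva : v ≠ a := by
          rintro rfl
          exact hu2 (by simpa [hσ, Equiv.swap_apply_left] using ha'A')
        have hva' : v ≠ a' := by rintro rfl; exact ha'A hv
        rw [hσ, Equiv.swap_apply_of_ne_of_ne hva hva'] at hu2 ⊢
        exact Finset.mem_erase.mpr ⟨hva, Finset.mem_sdiff.mpr ⟨hv, hu2⟩⟩
      have hlt : (A₁ \ A').card < d := by
        have h1 : (A₁ \ A').card ≤ ((A \ A').erase a).card := Finset.card_le_card hsdiff
        have h2 : a ∈ A \ A' := Finset.mem_sdiff.mpr ⟨haA, haA'⟩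
        have h3 := Finset.card_erase_of_mem h2
        have h4 : 0 < (A \ A').card := Finset.card_pos.mpr ⟨a, h2⟩
        omega
      rw [hcnt_eq]
      exact ih _ hlt hA₁F (hcard₁ ▸ hc) rfl


lemma As_bl_lt (i : Fin b) (x z : Fin b → ℕ) :
    As i (bl (fun j => j < i) x z) = As i x := by
  unfold As
  apply Finset.image_congr
  intro j hj
  simp only [prevs, Finset.coe_filter, Set.mem_setOf_eq, Finset.mem_univ, true_and] at hj
  simp [bl, hj]

lemma As_bl_ne (i : Fin b) (x z : Fin b → ℕ) :
    As i (bl (fun j => j ≠ i) x z) = As i x := by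
  unfold As
  apply Finset.image_congr
  intro j hj
  simp only [prevs, Finset.coe_filter, Set.mem_setOf_eq, Finset.mem_univ, true_and] at hj
  simp [bl, ne_of_lt hj]

lemma Ts_bl_ne (i : Fin b) (x z : Fin b → ℕ) :
    Ts i (bl (fun j => j ≠ i) x z) = Ts i x := by
  unfold Ts
  apply Finset.image_congr
  intro j hj
  simp only [Finset.coe_erase, Set.mem_diff, Set.mem_singleton_iff] at hj
  simp [bl, hj.2]

lemma Ts_bl_lt (i : Fin b) (x z : Fin b → ℕ) :
    Ts i (bl (fun j => j < i) x z) = As i x ∪ (Qs i).image z := by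
  have hsplit : Finset.univ.erase i = prevs i ∪ Qs i := by
    ext j
    simp only [Finset.mem_erase, Finset.mem_univ, and_true, Finset.mem_union, prevs, Qs,
      Finset.mem_filter, true_and]
    constructor
    · intro hj; exact lt_or_gt_of_ne hj
    · rintro (h | h)
      · exact ne_of_lt h
      · exact ne_of_gt h
  unfold Ts
  rw [hsplit, Finset.image_union]
  congr 1
  · rw [show As i x = (prevs i).image x from rfl]
    apply Finset.image_congr
    intro j hj
    simp only [prevs, Finset.coe_filter, Set.mem_setOf_eq, Finset.mem_univ, true_and] at hj
    simp [bl, hj]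
  · apply Finset.image_congr
    intro j hj
    simp only [Qs, Finset.coe_filter, Set.mem_setOf_eq, Finset.mem_univ, true_and] at hj
    simp [bl, not_lt_of_gt hj]

lemma As_subset_Fb {i : Fin b} {x : Fin b → ℕ} (hx : x ∈ Vb b n) : As i x ⊆ Fb n := by
  intro u hu
  rw [As, Finset.mem_image] at hu
  obtain ⟨j, _, rfl⟩ := hu
  exact mem_Vb.mp hx j

/-- coordinate averaging: replacing the indicator `ev` by the proportion `sv`. -/
lemma lemE (hn : 1 ≤ n) (i : Fin b) (w : (Fin b → ℕ) → ℕ)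
    (hw : ∀ x z, w (bl (fun j => j ≠ i) x z) = w x) :
    n * ∑ x ∈ Vb b n, ev i x * w x = ∑ x ∈ Vb b n, sv i x * w x := by
  have hb1 : 1 ≤ b := i.pos
  have key := blend_sum (n := n) (fun j => j ≠ i) (fun y => ev i y * w y)
  have hrhs : ∑ x ∈ Vb b n, ∑ _z ∈ Vb b n, ev i x * w x
      = n ^ b * ∑ x ∈ Vb b n, ev i x * w x := by
    rw [Finset.sum_comm, Finset.sum_const, card_Vb, smul_eq_mul, Finset.mul_sum]
  have hlhs : ∀ x ∈ Vb b n, ∑ z ∈ Vb b n, ev i (bl (fun j => j ≠ i) x z)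
        * w (bl (fun j => j ≠ i) x z)
      = sv i x * n ^ (b - 1) * w x := by
    intro x hx
    have hev : ∀ z, ev i (bl (fun j => j ≠ i) x z) = if z i ∈ As i x then 1 else 0 := by
      intro z
      unfold ev
      rw [As_bl_ne]
      congr 1
      simp [bl]
    calc ∑ z ∈ Vb b n, ev i (bl (fun j => j ≠ i) x z) * w (bl (fun j => j ≠ i) x z)
        = ∑ z ∈ Vb b n, (if z i ∈ As i x then 1 else 0) * w x := by
          apply Finset.sum_congr rfl; intro z _; rw [hev, hw]
      _ = (∑ z ∈ Vb b n, if z i ∈ As i x then 1 else 0) * w x := by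
          rw [Finset.sum_mul]
      _ = sv i x * n ^ (b - 1) * w x := by
          rw [count_coord hn i _ (As_subset_Fb hx)]; rfl
  rw [Finset.sum_congr rfl hlhs, hrhs] at key
  have hfact : ∑ x ∈ Vb b n, sv i x * n ^ (b - 1) * w x
      = (∑ x ∈ Vb b n, sv i x * w x) * n ^ (b - 1) := by
    rw [Finset.sum_mul]
    apply Finset.sum_congr rfl
    intro x _; ring
  rw [hfact] at key
  have hpow : n ^ b = n * n ^ (b - 1) := by
    conv_lhs => rw [show b = 1 + (b - 1) by omega]
    rw [pow_add, pow_one]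
  rw [hpow, mul_assoc, mul_comm (n ^ (b-1)) _, ← mul_assoc] at key
  have hposn : 0 < n ^ (b - 1) := Nat.pow_pos hn
  exact (Nat.eq_of_mul_eq_mul_right hposn key).symm

/-- The FKG-type correlation inequality for `sv` and `gv`. -/
lemma corr_ineq (hn : 1 ≤ n) (i : Fin b) (k : ℕ) :
    (∑ x ∈ Vb b n, sv i x) * (∑ x ∈ Vb b n, gv k i x)
      ≤ n ^ b * ∑ x ∈ Vb b n, sv i x * gv k i x := by
  set G : (Fin b → ℕ) → ℕ := fun x => cnt n k i (As i x) with hG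
  have hGsum : ∀ x, ∑ z ∈ Vb b n, gv k i (bl (fun j => j < i) x z) = G x := by
    intro x
    have : ∀ z, gv k i (bl (fun j => j < i) x z)
        = if b ≤ k + (As i x ∪ (Qs i).image z).card then 1 else 0 := by
      intro z; unfold gv; rw [Ts_bl_lt]
    rw [Finset.sum_congr rfl fun z _ => this z, Finset.sum_boole]
    simp [hG, cnt]
  -- (a)
  have ha : ∑ x ∈ Vb b n, sv i x * G x = n ^ b * ∑ x ∈ Vb b n, sv i x * gv k i x := by
    have key := blend_sum (n := n) (fun j => j < i) (fun y => sv i y * gv k i y)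
    have hl : ∀ x ∈ Vb b n, ∑ z ∈ Vb b n,
        sv i (bl (fun j => j < i) x z) * gv k i (bl (fun j => j < i) x z)
        = sv i x * G x := by
      intro x _
      rw [← hGsum x, Finset.mul_sum]
      apply Finset.sum_congr rfl
      intro z _
      rw [show sv i (bl (fun j => j < i) x z) = sv i x from by unfold sv; rw [As_bl_lt]]
    have hr : ∑ x ∈ Vb b n, ∑ _z ∈ Vb b n, sv i x * gv k i x
        = n ^ b * ∑ x ∈ Vb b n, sv i x * gv k i x := by
      rw [Finset.sum_comm, Finset.sum_const, card_Vb, smul_eq_mul, Finset.mul_sum]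
    rw [Finset.sum_congr rfl hl, hr] at key
    exact key
  -- (b)
  have hb : ∑ x ∈ Vb b n, G x = n ^ b * ∑ x ∈ Vb b n, gv k i x := by
    have key := blend_sum (n := n) (fun j => j < i) (fun y => gv k i y)
    have hr : ∑ x ∈ Vb b n, ∑ _z ∈ Vb b n, gv k i x
        = n ^ b * ∑ x ∈ Vb b n, gv k i x := by
      rw [Finset.sum_comm, Finset.sum_const, card_Vb, smul_eq_mul, Finset.mul_sum]
    rw [Finset.sum_congr rfl (fun x _ => hGsum x), hr] at key
    exact key
  -- (c) monovarying
  have hmono : MonovaryOn (fun x => (sv i x : ℕ)) G (Vb b n : Set (Fin b → ℕ)) := by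
    intro x hx y hy hlt
    by_contra hgt
    push_neg at hgt
    have : G y ≤ G x := by
      apply cnt_mono (As_subset_Fb (by simpa using hy)) (As_subset_Fb (by simpa using hx))
      exact le_of_lt hgt
    omega
  have cheb := hmono.sum_mul_sum_le_card_mul_sum
  rw [card_Vb, ha, hb] at cheb
  -- cheb : (∑ sv) * (n^b * ∑ gv) ≤ n^b * (n^b * ∑ sv gv)... careful with the card coefficient
  have hnb : 0 < n ^ b := Nat.pow_pos hn
  have : n ^ b * ((∑ x ∈ Vb b n, sv i x) * (∑ x ∈ Vb b n, gv k i x))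
      ≤ n ^ b * (n ^ b * ∑ x ∈ Vb b n, sv i x * gv k i x) := by
    calc n ^ b * ((∑ x ∈ Vb b n, sv i x) * (∑ x ∈ Vb b n, gv k i x))
        = (∑ x ∈ Vb b n, sv i x) * (n ^ b * (∑ x ∈ Vb b n, gv k i x)) := by ring
      _ ≤ n ^ b * (n ^ b * ∑ x ∈ Vb b n, sv i x * gv k i x) := cheb
  exact Nat.le_of_mul_le_mul_left this hnb

def chi (b k : ℕ) (x : Fin b → ℕ) : ℕ := if cf b x ≤ k then 1 else 0
def Mt (b n : ℕ) : ℕ := ∑ x ∈ Vb b n, cf b x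

lemma ineq1 (hn : 1 ≤ n) (k : ℕ) :
    n ^ b * ∑ x ∈ Vb b n, cf b x * chi b k x
      ≤ Mt b n * ((Vb b n).filter fun x => cf b x ≤ k).card := by
  have hanti : AntivaryOn (fun x => (cf b x : ℕ)) (chi b k) (Vb b n : Set (Fin b → ℕ)) := by
    intro x _ y _ hlt
    show cf b y ≤ cf b x
    unfold chi at hlt
    by_cases hx : cf b x ≤ k
    · by_cases hy : cf b y ≤ k <;> simp [hx, hy] at hlt
    · by_cases hy : cf b y ≤ k
      · omega
      · simp [hx, hy] at hlt
  have cheb := hanti.card_mul_sum_le_sum_mul_sum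
  rw [card_Vb] at cheb
  have hsum : ∑ x ∈ Vb b n, chi b k x = ((Vb b n).filter fun x => cf b x ≤ k).card := by
    unfold chi; rw [Finset.sum_boole]; simp
  rw [hsum] at cheb
  exact cheb

lemma ineq2 (hn : 1 ≤ n) (k : ℕ) :
    Mt b n * ((Vb b n).filter fun x => cf b x < k).card
      ≤ n ^ b * ∑ x ∈ Vb b n, cf b x * chi b k x := by
  have pw1 : ∀ (i : Fin b) (x : Fin b → ℕ), ev i x * chi b k x = ev i x * gv k i x := by
    intro i x
    by_cases h : x i ∈ As i x
    · have him := image_eq_Ts_of_ev h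
      unfold chi gv cf
      rw [him]
      have : (b - (Ts i x).card ≤ k) ↔ (b ≤ k + (Ts i x).card) := by omega
      rw [if_congr this rfl rfl]
    · simp [ev, h]
  have pw2 : ∀ (i : Fin b) (x : Fin b → ℕ),
      (if cf b x < k then (1 : ℕ) else 0) ≤ gv k i x := by
    intro i x
    by_cases h : cf b x < k
    · have h2 := (Ts_card_le i x).2
      have hcard : (Finset.image x Finset.univ).card ≤ b := by
        calc (Finset.image x Finset.univ).card ≤ (Finset.univ : Finset (Fin b)).card :=
            Finset.card_image_le
          _ = b := by simp
      have hcond : b ≤ k + (Ts i x).card := by unfold cf at h; omega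
      simp [gv, hcond, h]
    · simp [h]
  have hstep : ∀ i : Fin b, n * ∑ x ∈ Vb b n, ev i x * gv k i x
      = ∑ x ∈ Vb b n, sv i x * gv k i x := by
    intro i
    apply lemE hn i
    intro x z
    unfold gv
    rw [Ts_bl_ne]
  have hMt : n * Mt b n = ∑ i : Fin b, ∑ x ∈ Vb b n, sv i x := by
    have h1 : Mt b n = ∑ i : Fin b, ∑ x ∈ Vb b n, ev i x := by
      unfold Mt
      rw [Finset.sum_comm]
      exact Finset.sum_congr rfl fun x _ => (sum_ev x).symm
    rw [h1, Finset.mul_sum]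
    apply Finset.sum_congr rfl
    intro i _
    have := lemE hn i (fun _ => 1) (fun _ _ => rfl)
    simpa using this
  have hCless : ((Vb b n).filter fun x => cf b x < k).card
      = ∑ x ∈ Vb b n, (if cf b x < k then (1:ℕ) else 0) := by
    rw [Finset.sum_boole]; simp
  -- main chain, multiplied by n
  have main : n * (Mt b n * ((Vb b n).filter fun x => cf b x < k).card)
      ≤ n * (n ^ b * ∑ x ∈ Vb b n, cf b x * chi b k x) := by
    calc n * (Mt b n * ((Vb b n).filter fun x => cf b x < k).card)
        = (n * Mt b n) * ((Vb b n).filter fun x => cf b x < k).card := by ring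
      _ = ∑ i : Fin b, (∑ x ∈ Vb b n, sv i x) * ((Vb b n).filter fun x => cf b x < k).card := by
          rw [hMt, Finset.sum_mul]
      _ ≤ ∑ i : Fin b, (∑ x ∈ Vb b n, sv i x) * (∑ x ∈ Vb b n, gv k i x) := by
          apply Finset.sum_le_sum
          intro i _
          apply Nat.mul_le_mul_left
          rw [hCless]
          exact Finset.sum_le_sum fun x _ => pw2 i x
      _ ≤ ∑ i : Fin b, n ^ b * ∑ x ∈ Vb b n, sv i x * gv k i x :=
          Finset.sum_le_sum fun i _ => corr_ineq hn i k
      _ = ∑ i : Fin b, n ^ b * (n * ∑ x ∈ Vb b n, ev i x * gv k i x) := by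
          apply Finset.sum_congr rfl; intro i _; rw [hstep i]
      _ = n * (n ^ b * ∑ i : Fin b, ∑ x ∈ Vb b n, ev i x * chi b k x) := by
          rw [Finset.mul_sum, Finset.mul_sum]
          apply Finset.sum_congr rfl
          intro i _
          rw [show ∑ x ∈ Vb b n, ev i x * chi b k x = ∑ x ∈ Vb b n, ev i x * gv k i x from
            Finset.sum_congr rfl fun x _ => pw1 i x]
          ring
      _ = n * (n ^ b * ∑ x ∈ Vb b n, cf b x * chi b k x) := by
          congr 1
          congr 1
          rw [Finset.sum_comm]
          apply Finset.sum_congr rfl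
          intro x _
          rw [← Finset.sum_mul, sum_ev]
  exact Nat.le_of_mul_le_mul_left main hn

def Nk (b n k : ℕ) : ℕ := ((Vb b n).filter fun x => cf b x = k).card
def SN (b n k : ℕ) : ℕ := ∑ j ∈ Finset.range k, Nk b n j
def SJ (b n k : ℕ) : ℕ := ∑ j ∈ Finset.range (k + 1), j * Nk b n j

lemma card_le_filter_le (k : ℕ) :
    ((Vb b n).filter fun x => cf b x ≤ k).card = SN b n (k + 1) := by
  induction k with
  | zero =>
    unfold SN Nk
    have h01 : 0 + 1 = 1 := rfl
    rw [h01, Finset.sum_range_one]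
    congr 1
    apply Finset.filter_congr
    intro x _
    omega
  | succ k ih =>
    have hsplit : ((Vb b n).filter fun x => cf b x ≤ k + 1)
        = ((Vb b n).filter fun x => cf b x ≤ k) ∪ ((Vb b n).filter fun x => cf b x = k + 1) := by
      rw [← Finset.filter_or]
      apply Finset.filter_congr
      intro x _
      constructor
      · intro h; omega
      · intro h; omega
    have hdisj : Disjoint ((Vb b n).filter fun x => cf b x ≤ k)
        ((Vb b n).filter fun x => cf b x = k + 1) := by
      rw [Finset.disjoint_left]
      intro x hx hy
      rw [Finset.mem_filter] at hx hy
      omega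
    rw [hsplit, Finset.card_union_of_disjoint hdisj, ih]
    unfold SN
    exact (Finset.sum_range_succ _ (k+1)).symm

lemma card_le_filter_lt (k : ℕ) :
    ((Vb b n).filter fun x => cf b x < k).card = SN b n k := by
  cases k with
  | zero =>
    unfold SN
    simp
  | succ k =>
    rw [← card_le_filter_le]
    congr 1
    apply Finset.filter_congr
    intro x _
    constructor
    · intro h; omega
    · intro h; omega

lemma sum_cf_chi (k : ℕ) : ∑ x ∈ Vb b n, cf b x * chi b k x = SJ b n k := by
  induction k with
  | zero =>
    unfold SJ
    have h01 : 0 + 1 = 1 := rfl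
    rw [h01, Finset.sum_range_one, zero_mul]
    apply Finset.sum_eq_zero
    intro x _
    unfold chi
    by_cases h : cf b x ≤ 0
    · have : cf b x = 0 := by omega
      simp [this, h]
    · simp [h]
  | succ k ih =>
    have pw : ∀ x, cf b x * chi b (k+1) x
        = cf b x * chi b k x + (if cf b x = k + 1 then (k+1) else 0) := by
      intro x
      unfold chi
      by_cases h1 : cf b x ≤ k
      · rw [if_pos h1, if_pos (by omega : cf b x ≤ k + 1), if_neg (by omega : ¬ cf b x = k + 1)]
        simp
      · by_cases h2 : cf b x = k + 1
        · rw [if_pos (by omega : cf b x ≤ k + 1), if_neg h1, if_pos h2]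
          omega
        · rw [if_neg (by omega : ¬ cf b x ≤ k + 1), if_neg h1, if_neg h2]
          simp
    rw [Finset.sum_congr rfl fun x _ => pw x, Finset.sum_add_distrib, ih]
    have hlast : ∑ x ∈ Vb b n, (if cf b x = k + 1 then (k+1) else (0:ℕ))
        = (k+1) * Nk b n (k+1) := by
      rw [← Finset.sum_filter, Finset.sum_const]
      unfold Nk
      simp [mul_comm]
    rw [hlast]
    unfold SJ
    exact (Finset.sum_range_succ (fun j => j * Nk b n j) (k+1)).symm

lemma cf_lt_b (hb : 1 ≤ b) (x : Fin b → ℕ) : cf b x < b := by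
  have hne : (Finset.image x Finset.univ).Nonempty := by
    refine ⟨x ⟨0, hb⟩, Finset.mem_image_of_mem _ (Finset.mem_univ _)⟩
  have := Finset.card_pos.mpr hne
  unfold cf
  omega

lemma Nk_eq_zero (hb : 1 ≤ b) {k : ℕ} (hk : b ≤ k) : Nk b n k = 0 := by
  unfold Nk
  rw [Finset.card_eq_zero, Finset.filter_eq_empty_iff]
  intro x _
  have := cf_lt_b (b := b) hb x
  omega

lemma SN_full (hb : 1 ≤ b) {k : ℕ} (hk : b ≤ k) : SN b n k = n ^ b := by
  rw [← card_le_filter_lt, ← card_Vb]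
  congr 1
  rw [Finset.filter_true_of_mem]
  intro x _
  exact lt_of_lt_of_le (cf_lt_b hb x) hk

lemma SJ_full (hb : 1 ≤ b) {k : ℕ} (hk : b ≤ k + 1) : SJ b n k = Mt b n := by
  rw [← sum_cf_chi]
  unfold Mt
  apply Finset.sum_congr rfl
  intro x _
  have : chi b k x = 1 := by
    unfold chi
    rw [if_pos]
    have := cf_lt_b hb x
    omega
  rw [this, mul_one]

lemma cor1 (hn : 1 ≤ n) (k : ℕ) : n ^ b * SJ b n k ≤ Mt b n * SN b n (k + 1) := by
  rw [← sum_cf_chi, ← card_le_filter_le]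
  exact ineq1 hn k

lemma cor2 (hn : 1 ≤ n) (k : ℕ) : Mt b n * SN b n k ≤ n ^ b * SJ b n k := by
  rw [← sum_cf_chi, ← card_le_filter_lt]
  exact ineq2 hn k

def aN (b n k : ℕ) : ℕ := n ^ b * SJ b n k - Mt b n * SN b n k
def dN (b n k : ℕ) : ℕ := Mt b n * SN b n (k + 1) - n ^ b * SJ b n k

lemma SN_succ (k : ℕ) : SN b n (k + 1) = SN b n k + Nk b n k := Finset.sum_range_succ _ _
lemma SJ_succ (k : ℕ) : SJ b n (k + 1) = SJ b n k + (k + 1) * Nk b n (k + 1) :=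
  Finset.sum_range_succ _ _

lemma aN_zero : aN b n 0 = 0 := by
  unfold aN SJ SN
  simp

lemma aN_add_dN (hn : 1 ≤ n) (k : ℕ) : aN b n k + dN b n k = Mt b n * Nk b n k := by
  have h1 := cor1 (b := b) hn k
  have h2 := cor2 (b := b) hn k
  have h3 := SN_succ (b := b) (n := n) k
  unfold aN dN
  have : Mt b n * SN b n (k+1) = Mt b n * SN b n k + Mt b n * Nk b n k := by
    rw [h3, Nat.mul_add]
  omega

lemma aN_succ_add_dN (hn : 1 ≤ n) (k : ℕ) :
    aN b n (k + 1) + dN b n k = n ^ b * ((k + 1) * Nk b n (k + 1)) := by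
  have h1 := cor1 (b := b) hn k
  have h2 := cor2 (b := b) hn (k + 1)
  have h4 := SJ_succ (b := b) (n := n) k
  unfold aN dN
  have : n ^ b * SJ b n (k+1) = n ^ b * SJ b n k + n ^ b * ((k+1) * Nk b n (k+1)) := by
    rw [h4, Nat.mul_add]
  omega

lemma dN_eq_zero (hb : 1 ≤ b) {k : ℕ} (hk : b ≤ k) : dN b n k = 0 := by
  unfold dN
  rw [SN_full hb (by omega), SJ_full hb (by omega)]
  rw [Nat.mul_comm]
  simp

lemma aN_eq_zero (hb : 1 ≤ b) {k : ℕ} (hk : b ≤ k) : aN b n k = 0 := by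
  unfold aN
  rw [SN_full hb hk, SJ_full hb (by omega)]
  rw [Nat.mul_comm]
  simp

lemma total_mass (hn : 1 ≤ n) (hb : 1 ≤ b) :
    ∑ k ∈ Finset.range b, (aN b n k + dN b n k) = Mt b n * n ^ b := by
  rw [Finset.sum_congr rfl fun k _ => aN_add_dN hn k, ← Finset.mul_sum]
  congr 1
  exact SN_full hb le_rfl

lemma Mt_pos_iff : 0 < Mt b n ↔ ∃ x ∈ Vb b n, 0 < cf b x := by
  unfold Mt
  constructor
  · intro h
    by_contra hc
    push_neg at hc
    have : ∑ x ∈ Vb b n, cf b x = 0 := Finset.sum_eq_zero fun x hx => by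
      have := hc x hx; omega
    omega
  · rintro ⟨x, hx, hpos⟩
    exact lt_of_lt_of_le hpos (Finset.single_le_sum (fun _ _ => Nat.zero_le _) hx)

section Meas
open MeasureTheory ProbabilityTheory
open scoped ENNReal

lemma unifBins_singleton (n c : ℕ) :
    unifBins n {c} = if c ∈ Fb n then ((n : ℝ≥0∞))⁻¹ else 0 := by
  unfold unifBins
  rw [Measure.smul_apply, Measure.coe_finset_sum, Finset.sum_apply]
  have : ∀ k ∈ Finset.Icc 1 n, Measure.dirac k ({c} : Set ℕ)
      = if k = c then (1 : ℝ≥0∞) else 0 := by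
    intro k _
    rw [Measure.dirac_apply, Set.indicator_apply]
    simp
  rw [Finset.sum_congr rfl this, Finset.sum_ite_eq' (Finset.Icc 1 n) c (fun _ => (1:ℝ≥0∞))]
  unfold Fb
  by_cases hc : c ∈ Finset.Icc 1 n <;> simp [hc]

variable {Ω : Type*} [MeasurableSpace Ω] (μ : Measure Ω) [IsProbabilityMeasure μ]
  (n b : ℕ) (X : ℕ → Ω → ℕ)

lemma map_vec (hmeas : ∀ i, Measurable (X i))
    (hindep : iIndepFun X μ)
    (hunif : ∀ i, μ.map (X i) = unifBins n) :
    μ.map (fun ω (i : Fin b) => X i.val ω)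
      = ((n : ℝ≥0∞) ^ b)⁻¹ • ∑ x ∈ Vb b n, Measure.dirac x := by
  have hvmeas : Measurable (fun ω (i : Fin b) => X i.val ω) :=
    measurable_pi_lambda _ fun i => hmeas i.val
  apply Measure.ext_of_singleton
  intro x
  rw [Measure.map_apply hvmeas (measurableSet_singleton x)]
  set sets : ℕ → Set ℕ := fun i => if h : i < b then {x ⟨i, h⟩} else Set.univ with hsets
  have hpre : (fun ω (i : Fin b) => X i.val ω) ⁻¹' {x} = ⋂ i ∈ Finset.range b, X i ⁻¹' sets i := by
    ext ω
    simp only [Set.mem_preimage, Set.mem_singleton_iff, funext_iff, Set.mem_iInter,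
      Finset.mem_range]
    constructor
    · intro h i hi
      simp only [hsets, dif_pos hi, Set.mem_singleton_iff]
      exact h ⟨i, hi⟩
    · intro h i
      have := h i.val i.isLt
      simp only [hsets, dif_pos i.isLt, Set.mem_singleton_iff] at this
      simpa using this
  have hprod := hindep.measure_inter_preimage_eq_mul (Finset.range b)
      (sets := sets) (fun i _ => by
        by_cases h : i < b
        · simp only [hsets, dif_pos h]; exact measurableSet_singleton _
        · simp only [hsets, dif_neg h]; exact MeasurableSet.univ)
  rw [hpre, hprod]
  have hfac : ∏ i ∈ Finset.range b, μ (X i ⁻¹' sets i) = ∏ i : Fin b, unifBins n {x i} := by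
    rw [← Fin.prod_univ_eq_prod_range (fun i => μ (X i ⁻¹' sets i)) b]
    apply Finset.prod_congr rfl
    intro i _
    have hs : sets i.val = {x i} := by
      simp only [hsets, dif_pos i.isLt]
    rw [hs, ← Measure.map_apply (hmeas i.val) (measurableSet_singleton _), hunif i.val]
  rw [hfac]
  have hrhs : (((n : ℝ≥0∞) ^ b)⁻¹ • ∑ x' ∈ Vb b n, Measure.dirac x') {x}
      = if x ∈ Vb b n then ((n : ℝ≥0∞) ^ b)⁻¹ else 0 := by
    rw [Measure.smul_apply, Measure.coe_finset_sum, Finset.sum_apply]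
    have : ∀ x' ∈ Vb b n, Measure.dirac x' ({x} : Set (Fin b → ℕ))
        = if x' = x then (1 : ℝ≥0∞) else 0 := by
      intro x' _
      rw [Measure.dirac_apply, Set.indicator_apply]
      simp
    rw [Finset.sum_congr rfl this, Finset.sum_ite_eq' (Vb b n) x (fun _ => (1:ℝ≥0∞))]
    by_cases hx : x ∈ Vb b n <;> simp [hx]
  rw [hrhs]
  by_cases hx : x ∈ Vb b n
  · rw [if_pos hx]
    have : ∀ i : Fin b, unifBins n {x i} = ((n : ℝ≥0∞))⁻¹ := fun i => by
      rw [unifBins_singleton, if_pos (mem_Vb.mp hx i)]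
    rw [Finset.prod_congr rfl fun i _ => this i, Finset.prod_const]
    simp [ENNReal.inv_pow]
  · rw [if_neg hx]
    rw [mem_Vb] at hx
    push_neg at hx
    obtain ⟨i, hi⟩ := hx
    apply Finset.prod_eq_zero (Finset.mem_univ i)
    rw [unifBins_singleton, if_neg hi]

lemma collisions_eq_cf : collisions X b = cf b ∘ (fun ω (i : Fin b) => X i.val ω) := by
  funext ω
  unfold collisions cf Function.comp
  have himg : ((Finset.range b).image fun i => X i ω)
      = Finset.image (fun i : Fin b => X i.val ω) Finset.univ := by
    ext a
    simp only [Finset.mem_image, Finset.mem_range, Finset.mem_univ, true_and]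
    constructor
    · rintro ⟨i, hi, rfl⟩; exact ⟨⟨i, hi⟩, rfl⟩
    · rintro ⟨i, rfl⟩; exact ⟨i.val, i.isLt, rfl⟩
  rw [himg]

lemma map_collisions_singleton (hmeas : ∀ i, Measurable (X i))
    (hindep : iIndepFun X μ)
    (hunif : ∀ i, μ.map (X i) = unifBins n) (k : ℕ) :
    (μ.map (collisions X b)) {k} = ((n : ℝ≥0∞) ^ b)⁻¹ * Nk b n k := by
  classical
  have hvmeas : Measurable (fun ω (i : Fin b) => X i.val ω) :=
    measurable_pi_lambda _ fun i => hmeas i.val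
  rw [collisions_eq_cf, ← Measure.map_map (measurable_of_countable (cf b)) hvmeas,
    map_vec μ n b X hmeas hindep hunif,
    Measure.map_apply (measurable_of_countable (cf b)) (measurableSet_singleton k),
    Measure.smul_apply, Measure.coe_finset_sum, Finset.sum_apply, smul_eq_mul]
  congr 1
  have : ∀ x ∈ Vb b n, Measure.dirac x (cf b ⁻¹' {k})
      = if cf b x = k then (1 : ℝ≥0∞) else 0 := by
    intro x _
    rw [Measure.dirac_apply, Set.indicator_apply]
    by_cases h : cf b x = k <;> simp [Set.mem_preimage, h]
  rw [Finset.sum_congr rfl this, Finset.sum_boole]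
  unfold Nk
  norm_num

lemma integrable_dirac_nat {f : (Fin b → ℕ) → ℝ} (x : Fin b → ℕ) :
    Integrable f (Measure.dirac x) := by
  constructor
  · exact (measurable_of_countable f).aestronglyMeasurable
  · rw [HasFiniteIntegral]
    rw [lintegral_dirac]
    exact ENNReal.coe_lt_top

lemma integral_collisions (hn : 1 ≤ n) (hmeas : ∀ i, Measurable (X i))
    (hindep : iIndepFun X μ)
    (hunif : ∀ i, μ.map (X i) = unifBins n) :
    ∫ ω, (collisions X b ω : ℝ) ∂μ = (Mt b n : ℝ) / (n : ℝ) ^ b := by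
  have hvmeas : Measurable (fun ω (i : Fin b) => X i.val ω) :=
    measurable_pi_lambda _ fun i => hmeas i.val
  have h1 : ∫ ω, (collisions X b ω : ℝ) ∂μ
      = ∫ y, ((cf b y : ℝ)) ∂(μ.map (fun ω (i : Fin b) => X i.val ω)) := by
    rw [integral_map hvmeas.aemeasurable
      (measurable_of_countable fun y => ((cf b y : ℝ))).aestronglyMeasurable]
    rw [collisions_eq_cf]
    rfl
  rw [h1, map_vec μ n b X hmeas hindep hunif, integral_smul_measure,
    integral_finset_sum_measure (fun x _ => integrable_dirac_nat b x)]
  have h2 : ∀ x ∈ Vb b n, ∫ y, ((cf b y : ℝ)) ∂(Measure.dirac x) = (cf b x : ℝ) :=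
    fun x _ => integral_dirac _ x
  rw [Finset.sum_congr rfl h2]
  have h3 : ∑ x ∈ Vb b n, (cf b x : ℝ) = (Mt b n : ℝ) := by
    unfold Mt; push_cast; ring
  rw [h3]
  have h4 : (((n : ℝ≥0∞) ^ b)⁻¹).toReal = ((n : ℝ) ^ b)⁻¹ := by
    rw [ENNReal.toReal_inv]
    norm_num
  rw [h4, smul_eq_mul]
  field_simp

end Meas

end BBC

theorem stmt_17 {Ω : Type*} [MeasurableSpace Ω] (μ : Measure Ω) [IsProbabilityMeasure μ]
    (n b : ℕ) (hn : 1 ≤ n) (hb : 2 ≤ b)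
    (X : ℕ → Ω → ℕ) (hmeas : ∀ i, Measurable (X i))
    (hindep : iIndepFun X μ)
    (hunif : ∀ i, μ.map (X i) = unifBins n)
    (m : ℝ) (hm : m = ∫ ω, (collisions X b ω : ℝ) ∂μ) (hmpos : 0 < m) :
    ∃ ν : Measure (ℕ × ℕ), IsProbabilityMeasure ν ∧
      ν.map Prod.fst = μ.map (collisions X b) ∧
      ν.map Prod.snd = sizeBiased (μ.map (collisions X b)) m ∧
      ν {p : ℕ × ℕ | (p.2 : ℤ) - (p.1 : ℤ) ∉ ({0, 1} : Set ℤ)} = 0 := by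
  classical
  have hb1 : 1 ≤ b := le_trans (by norm_num) hb
  have hρ : ∀ k, (μ.map (collisions X b)) {k} = ((n : ℝ≥0∞) ^ b)⁻¹ * BBC.Nk b n k :=
    fun k => BBC.map_collisions_singleton μ n b X hmeas hindep hunif k
  have hmeq : m = (BBC.Mt b n : ℝ) / (n : ℝ) ^ b := by
    rw [hm, BBC.integral_collisions μ n b X hn hmeas hindep hunif]
  have hMt0 : BBC.Mt b n ≠ 0 := by
    intro h
    rw [hmeq, h] at hmpos
    norm_num at hmpos
  set M : ℝ≥0∞ := (BBC.Mt b n : ℝ≥0∞) with hMdef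
  set P : ℝ≥0∞ := (n : ℝ≥0∞) ^ b with hPdef
  have hM0 : M ≠ 0 := by
    rw [hMdef]
    exact_mod_cast hMt0
  have hMtop : M ≠ ∞ := by rw [hMdef]; exact ENNReal.natCast_ne_top _
  have hP0 : P ≠ 0 := by
    rw [hPdef]
    apply pow_ne_zero
    exact Nat.cast_ne_zero.mpr (by omega)
  have hPtop : P ≠ ∞ := by
    rw [hPdef]
    exact ENNReal.pow_ne_top (ENNReal.natCast_ne_top n)
  set c : ℝ≥0∞ := (M * P)⁻¹ with hcdef
  set ν : Measure (ℕ × ℕ) := c • Measure.sum (fun k =>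
      (BBC.aN b n k : ℝ≥0∞) • Measure.dirac (k, k)
        + (BBC.dN b n k : ℝ≥0∞) • Measure.dirac (k, k + 1)) with hνdef
  have hν_apply : ∀ s : Set (ℕ × ℕ), ν s
      = c * ∑' k, ((BBC.aN b n k : ℝ≥0∞) * s.indicator 1 (k, k)
          + (BBC.dN b n k : ℝ≥0∞) * s.indicator 1 (k, k + 1)) := by
    intro s
    rw [hνdef, Measure.smul_apply, Measure.sum_apply_of_countable, smul_eq_mul]
    congr 1
    apply tsum_congr
    intro k
    rw [Measure.add_apply, Measure.smul_apply, Measure.smul_apply,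
      Measure.dirac_apply, Measure.dirac_apply, smul_eq_mul, smul_eq_mul]
  -- total mass
  have htotal : ν Set.univ = 1 := by
    rw [hν_apply]
    simp only [Set.indicator_univ, Pi.one_apply, mul_one]
    have hzero : ∀ k ∉ Finset.range b, ((BBC.aN b n k : ℝ≥0∞) + (BBC.dN b n k : ℝ≥0∞)) = 0 := by
      intro k hk
      rw [Finset.mem_range, not_lt] at hk
      rw [BBC.aN_eq_zero hb1 hk, BBC.dN_eq_zero hb1 hk]
      simp
    rw [tsum_eq_sum hzero]
    have hT : ∑ k ∈ Finset.range b, ((BBC.aN b n k : ℝ≥0∞) + (BBC.dN b n k : ℝ≥0∞)) = M * P := by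
      have hnat := BBC.total_mass (b := b) (n := n) hn hb1
      calc ∑ k ∈ Finset.range b, ((BBC.aN b n k : ℝ≥0∞) + (BBC.dN b n k : ℝ≥0∞))
          = ((∑ k ∈ Finset.range b, (BBC.aN b n k + BBC.dN b n k) : ℕ) : ℝ≥0∞) := by
            push_cast; rfl
        _ = ((BBC.Mt b n * n ^ b : ℕ) : ℝ≥0∞) := by rw [hnat]
        _ = M * P := by rw [hMdef, hPdef]; push_cast; rfl
    rw [hT, hcdef]
    exact ENNReal.inv_mul_cancel (mul_ne_zero hM0 hP0) (ENNReal.mul_ne_top hMtop hPtop)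
  have hprob : IsProbabilityMeasure ν := ⟨htotal⟩
  -- first marginal
  have hfst : ν.map Prod.fst = μ.map (collisions X b) := by
    apply Measure.ext_of_singleton
    intro k
    rw [Measure.map_apply measurable_fst (measurableSet_singleton k), hν_apply]
    have htsum : (∑' k', ((BBC.aN b n k' : ℝ≥0∞)
          * (Prod.fst ⁻¹' {k} : Set (ℕ × ℕ)).indicator 1 (k', k')
        + (BBC.dN b n k' : ℝ≥0∞) * (Prod.fst ⁻¹' {k} : Set (ℕ × ℕ)).indicator 1 (k', k' + 1)))
        = (BBC.aN b n k : ℝ≥0∞) + (BBC.dN b n k : ℝ≥0∞) := by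
      rw [tsum_eq_single k]
      · have h1 : ((k, k) : ℕ × ℕ) ∈ (Prod.fst ⁻¹' {k} : Set (ℕ × ℕ)) := by simp
        have h2 : ((k, k + 1) : ℕ × ℕ) ∈ (Prod.fst ⁻¹' {k} : Set (ℕ × ℕ)) := by simp
        rw [Set.indicator_of_mem h1, Set.indicator_of_mem h2]
        simp
      · intro k' hk'
        have h1 : ((k', k') : ℕ × ℕ) ∉ (Prod.fst ⁻¹' {k} : Set (ℕ × ℕ)) := by simp [hk']
        have h2 : ((k', k' + 1) : ℕ × ℕ) ∉ (Prod.fst ⁻¹' {k} : Set (ℕ × ℕ)) := by simp [hk']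
        rw [Set.indicator_of_notMem h1, Set.indicator_of_notMem h2]
        simp
    rw [htsum, hρ k]
    have hcast : (BBC.aN b n k : ℝ≥0∞) + (BBC.dN b n k : ℝ≥0∞) = M * (BBC.Nk b n k : ℝ≥0∞) := by
      have := BBC.aN_add_dN (b := b) (n := n) hn k
      rw [hMdef]
      calc (BBC.aN b n k : ℝ≥0∞) + (BBC.dN b n k : ℝ≥0∞)
          = ((BBC.aN b n k + BBC.dN b n k : ℕ) : ℝ≥0∞) := by push_cast; rfl
        _ = ((BBC.Mt b n * BBC.Nk b n k : ℕ) : ℝ≥0∞) := by rw [this]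
        _ = (BBC.Mt b n : ℝ≥0∞) * (BBC.Nk b n k : ℝ≥0∞) := by push_cast; rfl
    rw [hcast, hcdef]
    calc (M * P)⁻¹ * (M * (BBC.Nk b n k : ℝ≥0∞))
        = (M⁻¹ * P⁻¹) * (M * (BBC.Nk b n k : ℝ≥0∞)) := by
          rw [ENNReal.mul_inv (Or.inl hM0) (Or.inl hMtop)]
      _ = (M⁻¹ * M) * (P⁻¹ * (BBC.Nk b n k : ℝ≥0∞)) := by ring
      _ = P⁻¹ * (BBC.Nk b n k : ℝ≥0∞) := by
          rw [ENNReal.inv_mul_cancel hM0 hMtop, one_mul]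
  -- ofReal m
  have hofm : ENNReal.ofReal m = M / P := by
    rw [hmeq, ENNReal.ofReal_div_of_pos (by positivity)]
    rw [hMdef, hPdef]
    congr 1
    · exact ENNReal.ofReal_natCast _
    · rw [ENNReal.ofReal_pow (by positivity), ENNReal.ofReal_natCast]
  -- second marginal
  have hsnd : ν.map Prod.snd = sizeBiased (μ.map (collisions X b)) m := by
    apply Measure.ext_of_singleton
    intro k
    rw [Measure.map_apply measurable_snd (measurableSet_singleton k), hν_apply]
    have hSB : sizeBiased (μ.map (collisions X b)) m {k}
        = ((k : ℝ≥0∞) * (μ.map (collisions X b)) {k}) / ENNReal.ofReal m := by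
      unfold sizeBiased
      rw [Measure.sum_apply_of_countable]
      rw [tsum_eq_single k]
      · rw [Measure.smul_apply, Measure.dirac_apply,
          Set.indicator_of_mem (Set.mem_singleton k), Pi.one_apply, smul_eq_mul, mul_one]
      · intro k' hk'
        rw [Measure.smul_apply, Measure.dirac_apply,
          Set.indicator_of_notMem (by simp [hk']), smul_eq_mul, mul_zero]
    rw [hSB, hofm]
    cases k with
    | zero =>
      have htsum : (∑' k', ((BBC.aN b n k' : ℝ≥0∞)
            * (Prod.snd ⁻¹' {0} : Set (ℕ × ℕ)).indicator 1 (k', k')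
          + (BBC.dN b n k' : ℝ≥0∞)
            * (Prod.snd ⁻¹' {0} : Set (ℕ × ℕ)).indicator 1 (k', k' + 1)))
          = (BBC.aN b n 0 : ℝ≥0∞) := by
        rw [tsum_eq_single 0]
        · have h1 : ((0, 0) : ℕ × ℕ) ∈ (Prod.snd ⁻¹' {0} : Set (ℕ × ℕ)) := by simp
          have h2 : ((0, 1) : ℕ × ℕ) ∉ (Prod.snd ⁻¹' {0} : Set (ℕ × ℕ)) := by simp
          rw [Set.indicator_of_mem h1, Set.indicator_of_notMem h2]
          simp
        · intro k' hk'
          have h1 : ((k', k') : ℕ × ℕ) ∉ (Prod.snd ⁻¹' {0} : Set (ℕ × ℕ)) := by simp [hk']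
          have h2 : ((k', k' + 1) : ℕ × ℕ) ∉ (Prod.snd ⁻¹' {0} : Set (ℕ × ℕ)) := by simp
          rw [Set.indicator_of_notMem h1, Set.indicator_of_notMem h2]
          simp
      rw [htsum, BBC.aN_zero]
      simp
    | succ k =>
      have hzero : ∀ k' ∉ ({k, k + 1} : Finset ℕ), ((BBC.aN b n k' : ℝ≥0∞)
            * (Prod.snd ⁻¹' {k + 1} : Set (ℕ × ℕ)).indicator 1 (k', k')
          + (BBC.dN b n k' : ℝ≥0∞)
            * (Prod.snd ⁻¹' {k + 1} : Set (ℕ × ℕ)).indicator 1 (k', k' + 1)) = 0 := by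
        intro k' hk'
        simp only [Finset.mem_insert, Finset.mem_singleton, not_or] at hk'
        have h1 : ((k', k') : ℕ × ℕ) ∉ (Prod.snd ⁻¹' {k + 1} : Set (ℕ × ℕ)) := by
          simp [hk'.2]
        have h2 : ((k', k' + 1) : ℕ × ℕ) ∉ (Prod.snd ⁻¹' {k + 1} : Set (ℕ × ℕ)) := by
          simp only [Set.mem_preimage, Set.mem_singleton_iff]
          omega
        rw [Set.indicator_of_notMem h1, Set.indicator_of_notMem h2]
        simp
      rw [tsum_eq_sum hzero]
      have hkne : k ∉ ({k + 1} : Finset ℕ) := by simp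
      rw [show ({k, k + 1} : Finset ℕ) = insert k {k+1} from rfl, Finset.sum_insert hkne,
        Finset.sum_singleton]
      have e1 : ((k, k) : ℕ × ℕ) ∉ (Prod.snd ⁻¹' {k + 1} : Set (ℕ × ℕ)) := by
        simp only [Set.mem_preimage, Set.mem_singleton_iff]; omega
      have e2 : ((k, k + 1) : ℕ × ℕ) ∈ (Prod.snd ⁻¹' {k + 1} : Set (ℕ × ℕ)) := by simp
      have e3 : ((k + 1, k + 1) : ℕ × ℕ) ∈ (Prod.snd ⁻¹' {k + 1} : Set (ℕ × ℕ)) := by simp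
      have e4 : ((k + 1, k + 2) : ℕ × ℕ) ∉ (Prod.snd ⁻¹' {k + 1} : Set (ℕ × ℕ)) := by
        simp only [Set.mem_preimage, Set.mem_singleton_iff]; omega
      rw [Set.indicator_of_notMem e1, Set.indicator_of_mem e2,
        Set.indicator_of_mem e3, Set.indicator_of_notMem e4]
      simp only [Pi.one_apply, mul_zero, mul_one, zero_add, add_zero, mul_zero]
      -- goal : c * (dN k + aN (k+1)) = ((k+1) * ((P⁻¹ * Nk (k+1)))) / (M / P)
      have hcast : (BBC.dN b n k : ℝ≥0∞) + (BBC.aN b n (k + 1) : ℝ≥0∞)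
          = P * (((k : ℝ≥0∞) + 1) * (BBC.Nk b n (k + 1) : ℝ≥0∞)) := by
        have := BBC.aN_succ_add_dN (b := b) (n := n) hn k
        rw [hPdef]
        calc (BBC.dN b n k : ℝ≥0∞) + (BBC.aN b n (k + 1) : ℝ≥0∞)
            = ((BBC.aN b n (k + 1) + BBC.dN b n k : ℕ) : ℝ≥0∞) := by push_cast; ring
          _ = ((n ^ b * ((k + 1) * BBC.Nk b n (k + 1)) : ℕ) : ℝ≥0∞) := by rw [this]
          _ = (n : ℝ≥0∞) ^ b * (((k : ℝ≥0∞) + 1) * (BBC.Nk b n (k + 1) : ℝ≥0∞)) := by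
              push_cast; ring
      rw [hcast, hρ (k + 1), hcdef]
      have hMPinv : (M / P)⁻¹ = M⁻¹ * P := by
        rw [div_eq_mul_inv, ENNReal.mul_inv (Or.inl hM0) (Or.inr (ENNReal.inv_ne_zero.mpr hPtop)),
          inv_inv]
      rw [div_eq_mul_inv, hMPinv, ENNReal.mul_inv (Or.inl hM0) (Or.inl hMtop)]
      have hPP : P⁻¹ * P = 1 := ENNReal.inv_mul_cancel hP0 hPtop
      push_cast
      calc M⁻¹ * P⁻¹ * (P * (((k : ℝ≥0∞) + 1) * (BBC.Nk b n (k + 1) : ℝ≥0∞)))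
          = (P⁻¹ * P) * (M⁻¹ * (((k : ℝ≥0∞) + 1) * (BBC.Nk b n (k + 1) : ℝ≥0∞))) := by ring
        _ = M⁻¹ * (((k : ℝ≥0∞) + 1) * (BBC.Nk b n (k + 1) : ℝ≥0∞)) := by rw [hPP, one_mul]
        _ = (P⁻¹ * P) * (M⁻¹ * (((k : ℝ≥0∞) + 1) * (BBC.Nk b n (k + 1) : ℝ≥0∞))) := by
            rw [hPP, one_mul]
        _ = ((k : ℝ≥0∞) + 1) * (P⁻¹ * (BBC.Nk b n (k + 1) : ℝ≥0∞)) * (M⁻¹ * P) := by ring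
  -- support
  have hbad : ν {p : ℕ × ℕ | (p.2 : ℤ) - (p.1 : ℤ) ∉ ({0, 1} : Set ℤ)} = 0 := by
    rw [hν_apply]
    have hz : ∀ k : ℕ, ((BBC.aN b n k : ℝ≥0∞)
          * ({p : ℕ × ℕ | (p.2 : ℤ) - (p.1 : ℤ) ∉ ({0, 1} : Set ℤ)}).indicator 1 (k, k)
        + (BBC.dN b n k : ℝ≥0∞)
          * ({p : ℕ × ℕ | (p.2 : ℤ) - (p.1 : ℤ) ∉ ({0, 1} : Set ℤ)}).indicator 1 (k, k + 1)) = 0 := by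
      intro k
      have h1 : ((k, k) : ℕ × ℕ) ∉ {p : ℕ × ℕ | (p.2 : ℤ) - (p.1 : ℤ) ∉ ({0, 1} : Set ℤ)} := by
        simp [Set.mem_setOf_eq]
      have h2 : ((k, k + 1) : ℕ × ℕ) ∉ {p : ℕ × ℕ | (p.2 : ℤ) - (p.1 : ℤ) ∉ ({0, 1} : Set ℤ)} := by
        simp only [Set.mem_setOf_eq, not_not]
        push_cast
        simp
      rw [Set.indicator_of_notMem h1, Set.indicator_of_notMem h2]
      simp
    rw [tsum_congr hz]
    simp
  exact ⟨ν, hprob, hfst, hsnd, hbad⟩
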